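/- Let 0<α₁<α₂, h>0, and take parameters (α₀,α₁,α₂,α₃)=(α₁,α₁,α₂,α₂). Let E_h={(x,y)∈ℝ⁴×ℝ⁴ : C₁(x)=0, C₂(x,y)=0, H(x,y)=h}. Then the image of E_h under the map (x,y)↦(J₁(x,y),J₂(x,y)), where J₁=x₀y₁−x₁y₀ and J₂=x₂y₃−x₃y₂, equals the convex polygon {(j₁,j₂)∈ℝ² : |j₁|/√α₁+|j₂|/√α₂ ≤ √(2h)}. -/

import Mathlib

noncomputable section

/-- Points of `T*ℝⁿ = ℝⁿ × ℝⁿ`, written `(x, y)`. -/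
abbrev Pt (n : ℕ) := (Fin n → ℝ) × (Fin n → ℝ)

/-- `D(x) = Σᵢ xᵢ²/αᵢ²`. -/
def Dq {n : ℕ} (α : Fin n → ℝ) (x : Fin n → ℝ) : ℝ := ∑ i, (x i)^2 / (α i)^2

/-- Partial derivative of `f` in the direction `xᵢ`. -/
def pdx {n : ℕ} (f : Pt n → ℝ) (p : Pt n) (i : Fin n) : ℝ :=
  fderiv ℝ f p (Pi.single i 1, 0)

/-- Partial derivative of `f` in the direction `yᵢ`. -/
def pdy {n : ℕ} (f : Pt n → ℝ) (p : Pt n) (i : Fin n) : ℝ :=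
  fderiv ℝ f p (0, Pi.single i 1)

/-- The Dirac bracket on `T*ℝⁿ` for the ellipsoid with semi-axes `√(αᵢ)`:
`{f,g} = Σᵢₖ (∂f/∂xᵢ ∂g/∂yₖ − ∂g/∂xᵢ ∂f/∂yₖ)(δᵢₖ − xᵢxₖ/(D αᵢ αₖ))
        − Σᵢₖ (∂f/∂yᵢ)(∂g/∂yₖ)(xᵢyₖ − xₖyᵢ)/(D αᵢ αₖ)`. -/
def dirac {n : ℕ} (α : Fin n → ℝ) (f g : Pt n → ℝ) (p : Pt n) : ℝ :=
  (∑ i, ∑ k,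
    (pdx f p i * pdy g p k - pdx g p i * pdy f p k) *
      ((if i = k then (1:ℝ) else 0) - p.1 i * p.1 k / (Dq α p.1 * α i * α k)))
  - ∑ i, ∑ k,
      pdy f p i * pdy g p k * (p.1 i * p.2 k - p.1 k * p.2 i) / (Dq α p.1 * α i * α k)

/-- The constraint `C₁(x) = Σᵢ xᵢ²/αᵢ − 1`. -/
def C1 {n : ℕ} (α : Fin n → ℝ) (x : Fin n → ℝ) : ℝ := (∑ i, (x i)^2 / α i) - 1

/-- The constraint `C₂(x,y) = Σᵢ xᵢyᵢ/αᵢ`. -/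
def C2 {n : ℕ} (α : Fin n → ℝ) (p : Pt n) : ℝ := ∑ i, p.1 i * p.2 i / α i

/-- The Hamiltonian `H = ½(y₀² + y₁² + y₂² + y₃²)`. -/
def H4 (p : Pt 4) : ℝ := (1/2) * ((p.2 0)^2 + (p.2 1)^2 + (p.2 2)^2 + (p.2 3)^2)

/-- The angular momentum `J₁ = x₀y₁ − x₁y₀`. -/
def Jmom1 (p : Pt 4) : ℝ := p.1 0 * p.2 1 - p.1 1 * p.2 0

/-- The angular momentum `J₂ = x₂y₃ − x₃y₂`. -/
def Jmom2 (p : Pt 4) : ℝ := p.1 2 * p.2 3 - p.1 3 * p.2 2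


private lemma cs_core (s₁ s₂ S P Q U V e₁ e₂ : ℝ) (hs₁ : 0 < s₁) (hs₂ : 0 < s₂) (hS : 0 ≤ S)
    (hPn : 0 ≤ P) (hQn : 0 ≤ Q) (hUn : 0 ≤ U) (hVn : 0 ≤ V) (he₁ : 0 ≤ e₁) (he₂ : 0 ≤ e₂)
    (hPQ : P*s₂^2 + Q*s₁^2 = s₁^2*s₂^2) (hUV : U + V = S^2)
    (h1 : e₁^2 ≤ P*U) (h2 : e₂^2 ≤ Q*V) : e₁*s₂ + e₂*s₁ ≤ S*(s₁*s₂) := by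
  have hprod : (e₁*e₂)^2 ≤ (P*U)*(Q*V) := by
    have := mul_le_mul h1 h2 (sq_nonneg e₂) (by positivity)
    nlinarith [this]
  have hcross : 2*(e₁*e₂*(s₁*s₂)) ≤ P*s₂^2*V + Q*s₁^2*U := by
    have hg : 0 ≤ 2*(e₁*e₂*(s₁*s₂)) := by positivity
    have hX : 0 ≤ P*s₂^2*V + Q*s₁^2*U := by positivity
    have hX2 : (2*(e₁*e₂*(s₁*s₂)))^2 ≤ (P*s₂^2*V + Q*s₁^2*U)^2 := by
      nlinarith [sq_nonneg (P*s₂^2*V - Q*s₁^2*U),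
        mul_le_mul_of_nonneg_right hprod (by positivity : (0:ℝ) ≤ s₁^2*s₂^2)]
    have h' := Real.sqrt_le_sqrt hX2
    rwa [Real.sqrt_sq hg, Real.sqrt_sq hX] at h'
  have hsq : (e₁*s₂ + e₂*s₁)^2 ≤ (S*(s₁*s₂))^2 := by
    have hid : (S*(s₁*s₂))^2 = (U+V)*(P*s₂^2+Q*s₁^2) := by
      rw [hUV, hPQ]; ring
    nlinarith [mul_le_mul_of_nonneg_right h1 (sq_nonneg s₂),
      mul_le_mul_of_nonneg_right h2 (sq_nonneg s₁), hcross, hid]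
  have hL : 0 ≤ e₁*s₂ + e₂*s₁ := by positivity
  have h'' := Real.sqrt_le_sqrt hsq
  rwa [Real.sqrt_sq hL, Real.sqrt_sq (by positivity)] at h''

private lemma stmt4_helper (α₁ α₂ h t u y₁ y₃ : ℝ) (hα₁ : 0 < α₁) (hα₂ : 0 < α₂)
    (htu : t^2 + u^2 = 1) (hE : y₁^2 + y₃^2 ≤ 2*h) :
    ∃ p : Pt 4,
      (C1 ![α₁, α₁, α₂, α₂] p.1 = 0 ∧ C2 ![α₁, α₁, α₂, α₂] p = 0 ∧ H4 p = h) ∧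
      Jmom1 p = Real.sqrt α₁ * t * y₁ ∧ Jmom2 p = Real.sqrt α₂ * u * y₃ := by
  set s₁ := Real.sqrt α₁ with hs₁def
  set s₂ := Real.sqrt α₂ with hs₂def
  have hs₁ : 0 < s₁ := Real.sqrt_pos.mpr hα₁
  have hs₂ : 0 < s₂ := Real.sqrt_pos.mpr hα₂
  have hs₁2 : s₁^2 = α₁ := Real.sq_sqrt hα₁.le
  have hs₂2 : s₂^2 = α₂ := Real.sq_sqrt hα₂.le
  set D := t^2/α₁ + u^2/α₂ with hD
  have hDpos : 0 < D := by
    have h1 : 0 < t^2*α₂ + u^2*α₁ := by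
      nlinarith [mul_le_mul_of_nonneg_left (min_le_right α₁ α₂) (sq_nonneg t),
                 mul_le_mul_of_nonneg_left (min_le_left α₁ α₂) (sq_nonneg u),
                 lt_min hα₁ hα₂]
    have h2 : D = (t^2*α₂ + u^2*α₁)/(α₁*α₂) := by rw [hD, div_add_div _ _ hα₁.ne' hα₂.ne']; ring
    rw [h2]; positivity
  set κ := Real.sqrt ((2*h - y₁^2 - y₃^2)/D) with hκdef
  have hκ2 : κ^2 * D = 2*h - y₁^2 - y₃^2 := by
    have hk : κ^2 = (2*h - y₁^2 - y₃^2)/D := Real.sq_sqrt (by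
      apply div_nonneg (by linarith) hDpos.le)
    rw [hk]; field_simp
  refine ⟨(![s₁*t, 0, s₂*u, 0], ![-(κ*u/s₂), y₁, κ*t/s₁, y₃]), ⟨?_, ?_, ?_⟩, ?_, ?_⟩
  · simp only [C1, Fin.sum_univ_four]
    simp
    field_simp
    linear_combination (t^2*α₂)*hs₁2 + (u^2*α₁)*hs₂2 + (α₁*α₂)*htu
  · simp only [C2, Fin.sum_univ_four]
    simp
    field_simp
    linear_combination (-(t*(κ*u)*α₂))*hs₁2 + (u*(κ*t)*α₁)*hs₂2
  · simp only [H4]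
    simp
    have e1 : (κ*u/s₂)^2 = κ^2*u^2/α₂ := by rw [div_pow, mul_pow, hs₂2]
    have e2 : (κ*t/s₁)^2 = κ^2*t^2/α₁ := by rw [div_pow, mul_pow, hs₁2]
    have e3 : κ^2*u^2/α₂ + κ^2*t^2/α₁ = 2*h - y₁^2 - y₃^2 := by
      have e4 : κ^2*u^2/α₂ + κ^2*t^2/α₁ = κ^2 * D := by rw [hD]; ring
      rw [e4, hκ2]
    rw [e1, e2]
    linarith [e3]
  · simp [Jmom1]
  · simp [Jmom2]

private lemma stmt4_fwd (α₁ α₂ h : ℝ) (hα₁ : 0 < α₁) (hα₂ : 0 < α₂) (hh : 0 < h)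
    (p : Pt 4)
    (hC1 : C1 ![α₁, α₁, α₂, α₂] p.1 = 0) (hH : H4 p = h) :
    |Jmom1 p| / Real.sqrt α₁ + |Jmom2 p| / Real.sqrt α₂ ≤ Real.sqrt (2*h) := by
  have hs₁ : 0 < Real.sqrt α₁ := Real.sqrt_pos.mpr hα₁
  have hs₂ : 0 < Real.sqrt α₂ := Real.sqrt_pos.mpr hα₂
  have hs₁2 : Real.sqrt α₁^2 = α₁ := Real.sq_sqrt hα₁.le
  have hs₂2 : Real.sqrt α₂^2 = α₂ := Real.sq_sqrt hα₂.le
  have hS : 0 < Real.sqrt (2*h) := Real.sqrt_pos.mpr (by linarith)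
  have hS2 : Real.sqrt (2*h)^2 = 2*h := Real.sq_sqrt (by linarith)
  simp only [C1, Fin.sum_univ_four] at hC1
  simp only [Matrix.cons_val_zero, Matrix.cons_val_one, Matrix.head_cons,
    Matrix.cons_val_two, Matrix.tail_cons, Matrix.cons_val_three] at hC1
  simp only [H4] at hH
  have hPQ' : ((p.1 0)^2 + (p.1 1)^2)/α₁ + ((p.1 2)^2 + (p.1 3)^2)/α₂ = 1 := by
    rw [add_div, add_div]; linarith
  have hPQ : ((p.1 0)^2 + (p.1 1)^2)*(Real.sqrt α₂)^2
      + ((p.1 2)^2 + (p.1 3)^2)*(Real.sqrt α₁)^2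
      = (Real.sqrt α₁)^2*(Real.sqrt α₂)^2 := by
    rw [hs₁2, hs₂2]
    field_simp at hPQ'
    linarith [hPQ']
  have hUV : ((p.2 0)^2 + (p.2 1)^2) + ((p.2 2)^2 + (p.2 3)^2) = Real.sqrt (2*h)^2 := by
    rw [hS2]; linarith
  have h1 : |Jmom1 p|^2 ≤ ((p.1 0)^2 + (p.1 1)^2)*((p.2 0)^2 + (p.2 1)^2) := by
    rw [sq_abs]
    simp only [Jmom1]
    nlinarith [sq_nonneg (p.1 0 * p.2 0 + p.1 1 * p.2 1)]
  have h2 : |Jmom2 p|^2 ≤ ((p.1 2)^2 + (p.1 3)^2)*((p.2 2)^2 + (p.2 3)^2) := by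
    rw [sq_abs]
    simp only [Jmom2]
    nlinarith [sq_nonneg (p.1 2 * p.2 2 + p.1 3 * p.2 3)]
  have key := cs_core (Real.sqrt α₁) (Real.sqrt α₂) (Real.sqrt (2*h))
    ((p.1 0)^2 + (p.1 1)^2) ((p.1 2)^2 + (p.1 3)^2)
    ((p.2 0)^2 + (p.2 1)^2) ((p.2 2)^2 + (p.2 3)^2)
    (|Jmom1 p|) (|Jmom2 p|) hs₁ hs₂ hS.le (by positivity) (by positivity)
    (by positivity) (by positivity) (abs_nonneg _) (abs_nonneg _) hPQ hUV h1 h2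
  rw [div_add_div _ _ hs₁.ne' hs₂.ne', div_le_iff₀ (by positivity)]
  linarith [key]

private lemma sign_mul_abs' (r : ℝ) : Real.sign r * |r| = r := by
  rcases lt_trichotomy r 0 with h' | h' | h'
  · rw [Real.sign_of_neg h', abs_of_neg h']; ring
  · simp [h']
  · rw [Real.sign_of_pos h', abs_of_pos h']; ring

set_option maxHeartbeats 1000000 in
/-- the image of the energy surface `E_h` under the momentum map `(J₁,J₂)`
is the convex polygon `|j₁|/√α₁ + |j₂|/√α₂ ≤ √(2h)`. -/
theorem stmt4 (α₁ α₂ h : ℝ) (hα₁ : 0 < α₁) (hα₁₂ : α₁ < α₂) (hh : 0 < h) :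
    (fun p : Pt 4 => (Jmom1 p, Jmom2 p)) ''
      {p : Pt 4 | C1 ![α₁, α₁, α₂, α₂] p.1 = 0 ∧ C2 ![α₁, α₁, α₂, α₂] p = 0 ∧ H4 p = h}
    = {j : ℝ × ℝ | |j.1| / Real.sqrt α₁ + |j.2| / Real.sqrt α₂ ≤ Real.sqrt (2 * h)} := by
  have hα₂ : 0 < α₂ := lt_trans hα₁ hα₁₂
  have hs₁ : 0 < Real.sqrt α₁ := Real.sqrt_pos.mpr hα₁
  have hs₂ : 0 < Real.sqrt α₂ := Real.sqrt_pos.mpr hα₂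
  have hS : 0 < Real.sqrt (2*h) := Real.sqrt_pos.mpr (by linarith)
  have hS2 : Real.sqrt (2*h)^2 = 2*h := Real.sq_sqrt (by linarith)
  ext j
  simp only [Set.mem_image, Set.mem_setOf_eq]
  constructor
  · rintro ⟨p, ⟨hC1, hC2, hH⟩, hmap⟩
    have := stmt4_fwd α₁ α₂ h hα₁ hα₂ hh p hC1 hH
    rw [← hmap]
    simpa using this
  · intro hj
    set a := |j.1| / Real.sqrt α₁ with ha_def
    set b := |j.2| / Real.sqrt α₂ with hb_def
    have han : 0 ≤ a := by positivity
    have hbn : 0 ≤ b := by positivity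
    have hja : |j.1| = Real.sqrt α₁ * a := by
      rw [ha_def, mul_div_cancel₀]; exact hs₁.ne'
    have hjb : |j.2| = Real.sqrt α₂ * b := by
      rw [hb_def, mul_div_cancel₀]; exact hs₂.ne'
    by_cases hc : a + b = 0
    · have ha0 : a = 0 := by linarith
      have hb0 : b = 0 := by linarith
      have hj1 : j.1 = 0 := by
        have : |j.1| = 0 := by rw [hja, ha0, mul_zero]
        exact abs_eq_zero.mp this
      have hj2 : j.2 = 0 := by
        have : |j.2| = 0 := by rw [hjb, hb0, mul_zero]
        exact abs_eq_zero.mp this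
      obtain ⟨p, hp, hJ1, hJ2⟩ := stmt4_helper α₁ α₂ h 1 0 0 0 hα₁ hα₂ (by norm_num)
        (by nlinarith)
      refine ⟨p, hp, ?_⟩
      rw [hJ1, hJ2, Prod.ext_iff]
      constructor <;> simp [hj1, hj2]
    · have hcpos : 0 < a + b := lt_of_le_of_ne (by linarith) (Ne.symm hc)
      set c := a + b with hc_def
      set t := Real.sqrt (a/c) with ht_def
      set u := Real.sqrt (b/c) with hu_def
      set y₁ := Real.sign j.1 * Real.sqrt (a*c) with hy₁_def
      set y₃ := Real.sign j.2 * Real.sqrt (b*c) with hy₃_def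
      have ht2 : t^2 = a/c := Real.sq_sqrt (by positivity)
      have hu2 : u^2 = b/c := Real.sq_sqrt (by positivity)
      have htu : t^2 + u^2 = 1 := by
        rw [ht2, hu2]; field_simp; exact hc_def.symm
      have hsign1 : (Real.sign j.1)^2 ≤ 1 := by
        rcases Real.sign_apply_eq j.1 with h' | h' | h' <;> rw [h'] <;> norm_num
      have hsign2 : (Real.sign j.2)^2 ≤ 1 := by
        rcases Real.sign_apply_eq j.2 with h' | h' | h' <;> rw [h'] <;> norm_num
      have hy₁2 : y₁^2 ≤ a*c := by
        rw [hy₁_def, mul_pow, Real.sq_sqrt (by positivity)]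
        nlinarith [mul_nonneg han hcpos.le]
      have hy₃2 : y₃^2 ≤ b*c := by
        rw [hy₃_def, mul_pow, Real.sq_sqrt (by positivity)]
        nlinarith [mul_nonneg hbn hcpos.le]
      have hcS : c ≤ Real.sqrt (2*h) := hj
      have hc2 : c^2 ≤ 2*h := by
        calc c^2 = c*c := sq c
          _ ≤ Real.sqrt (2*h) * Real.sqrt (2*h) :=
              mul_self_le_mul_self (by positivity) hcS
          _ = 2*h := Real.mul_self_sqrt (by linarith)
      have hE : y₁^2 + y₃^2 ≤ 2*h := by
        have habc : a*c + b*c = c^2 := by rw [hc_def]; ring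
        linarith [hy₁2, hy₃2]
      obtain ⟨p, hp, hJ1, hJ2⟩ := stmt4_helper α₁ α₂ h t u y₁ y₃ hα₁ hα₂ htu hE
      refine ⟨p, hp, ?_⟩
      have hta : t * Real.sqrt (a*c) = a := by
        rw [ht_def, ← Real.sqrt_mul (by positivity)]
        rw [show a/c*(a*c) = a^2 by field_simp]
        exact Real.sqrt_sq han
      have hub : u * Real.sqrt (b*c) = b := by
        rw [hu_def, ← Real.sqrt_mul (by positivity)]
        rw [show b/c*(b*c) = b^2 by field_simp]
        exact Real.sqrt_sq hbn
      have hJ1' : Jmom1 p = j.1 := by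
        rw [hJ1, hy₁_def]
        calc Real.sqrt α₁ * t * (Real.sign j.1 * Real.sqrt (a*c))
            = Real.sign j.1 * (Real.sqrt α₁ * (t * Real.sqrt (a*c))) := by ring
          _ = Real.sign j.1 * |j.1| := by rw [hta, ← hja]
          _ = j.1 := sign_mul_abs' j.1
      have hJ2' : Jmom2 p = j.2 := by
        rw [hJ2, hy₃_def]
        calc Real.sqrt α₂ * u * (Real.sign j.2 * Real.sqrt (b*c))
            = Real.sign j.2 * (Real.sqrt α₂ * (u * Real.sqrt (b*c))) := by ring
          _ = Real.sign j.2 * |j.2| := by rw [hub, ← hjb]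
          _ = j.2 := sign_mul_abs' j.2
      rw [hJ1', hJ2']
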